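/- If I and J are monomial ideals in S = k[x_1,...,x_n] such that I_{≥p} and J_{≥q} are stable ideals, then (I ∩ J)_{≥max(p,q)} is a stable ideal. -/
import Mathlib


open MvPolynomial

noncomputable section

/-- The ideal generated by all monomials of `I` of total degree at least `t`. -/
def trunc {K : Type*} [Field K] {n : ℕ} (I : Ideal (MvPolynomial (Fin n) K)) (t : ℕ) :
    Ideal (MvPolynomial (Fin n) K) :=
  Ideal.span { p | ∃ v : Fin n →₀ ℕ, p = monomial v (1 : K) ∧ p ∈ I ∧ t ≤ v.sum fun _ e => e }

/-- A monomial ideal `J` is stable if for every monomial `x^v ∈ J` and every `j < m(v)`,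
where `m(v)` is the largest index of a variable dividing `x^v`, the monomial
`x_j · x^v / x_{m(v)}` also lies in `J`. -/
def IsStable {K : Type*} [Field K] {n : ℕ} (J : Ideal (MvPolynomial (Fin n) K)) : Prop :=
  ∀ v : Fin n →₀ ℕ, monomial v (1 : K) ∈ J →
    ∀ m : Fin n, m ∈ v.support → (∀ i ∈ v.support, i ≤ m) →
      ∀ j : Fin n, j < m →
        monomial (v - Finsupp.single m 1 + Finsupp.single j 1) (1 : K) ∈ J

lemma mem_trunc_iff {K : Type*} [Field K] {n : ℕ} (I : Ideal (MvPolynomial (Fin n) K))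
    (t : ℕ) (v : Fin n →₀ ℕ) :
    monomial v (1 : K) ∈ Ideal.span { p | ∃ u : Fin n →₀ ℕ, p = monomial u (1 : K) ∧ p ∈ I ∧ t ≤ u.sum fun _ e => e } ↔
      monomial v (1 : K) ∈ I ∧ t ≤ v.sum fun _ e => e := by
  have hset : { p : MvPolynomial (Fin n) K | ∃ u : Fin n →₀ ℕ, p = monomial u (1 : K) ∧ p ∈ I ∧ t ≤ u.sum fun _ e => e }
      = (fun u : Fin n →₀ ℕ => monomial u (1 : K)) '' {u | monomial u (1 : K) ∈ I ∧ t ≤ u.sum fun _ e => e} := by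
    ext p
    constructor
    · rintro ⟨u, rfl, h1, h2⟩; exact ⟨u, ⟨h1, h2⟩, rfl⟩
    · rintro ⟨u, ⟨h1, h2⟩, rfl⟩; exact ⟨u, rfl, h1, h2⟩
  rw [hset, mem_ideal_span_monomial_image]
  classical
  rw [support_monomial, if_neg (one_ne_zero (α := K))]
  simp only [Finset.mem_singleton, forall_eq, Set.mem_setOf_eq]
  constructor
  · rintro ⟨u, ⟨h1, h2⟩, hle⟩
    have hv : v = (v - u) + u := (tsub_add_cancel_of_le hle).symm
    constructor
    · have : monomial v (1 : K) = monomial (v - u) 1 * monomial u 1 := by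
        rw [monomial_mul, one_mul, ← hv]
      rw [this]
      exact Ideal.mul_mem_left _ _ h1
    · calc t ≤ u.sum fun _ e => e := h2
        _ ≤ v.sum fun _ e => e := by
            rw [hv, Finsupp.sum_add_index (by simp) (by simp)]
            omega
  · rintro ⟨h1, h2⟩
    exact ⟨v, ⟨h1, h2⟩, le_refl v⟩

/-- If `I_{≥p}` and `J_{≥q}` are stable, then `(I ∩ J)_{≥ max(p,q)}` is
stable. -/
theorem stmt5 {K : Type*} [Field K] {n : ℕ}
    (I J : Ideal (MvPolynomial (Fin n) K)) (p q : ℕ)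
    (hI : IsStable (trunc I p)) (hJ : IsStable (trunc J q)) :
    IsStable (trunc (I ⊓ J) (max p q)) := by
  intro v hv m hm hmax j hj
  rw [trunc, mem_trunc_iff] at hv
  obtain ⟨⟨hvI, hvJ⟩, hdeg⟩ := hv
  set w := v - Finsupp.single m 1 + Finsupp.single j 1 with hw
  have hvm : 1 ≤ v m := by
    rw [Finsupp.mem_support_iff] at hm; omega
  have hdegw : (w.sum fun _ e => e) = v.sum fun _ e => e := by
    have hle : Finsupp.single m 1 ≤ v := by
      rw [Finsupp.single_le_iff]; exact hvm
    have hv' : (v - Finsupp.single m 1) + Finsupp.single m 1 = v := tsub_add_cancel_of_le hle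
    have h1 : ((v - Finsupp.single m 1).sum fun _ e => e) + 1 = v.sum fun _ e => e := by
      conv_rhs => rw [← hv']
      rw [Finsupp.sum_add_index (by simp) (by simp), Finsupp.sum_single_index (by simp)]
    rw [hw, Finsupp.sum_add_index (by simp) (by simp), Finsupp.sum_single_index (by simp)]
    omega
  have hwI : monomial w (1 : K) ∈ I := by
    have := hI v (by rw [trunc, mem_trunc_iff]; exact ⟨hvI, le_trans (le_max_left p q) hdeg⟩) m hm hmax j hj
    rw [trunc, mem_trunc_iff] at this
    exact this.1
  have hwJ : monomial w (1 : K) ∈ J := by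
    have := hJ v (by rw [trunc, mem_trunc_iff]; exact ⟨hvJ, le_trans (le_max_right p q) hdeg⟩) m hm hmax j hj
    rw [trunc, mem_trunc_iff] at this
    exact this.1
  rw [trunc, mem_trunc_iff]
  exact ⟨⟨hwI, hwJ⟩, by omega⟩
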